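/- Let {aᵢ ⊗ bᵢ : i = 1…d} be an orthonormal product basis of ℂ² ⊗ ℂ^{d₂}, d = 2d₂. Then for every index κ ∈ {1…d} there exists an index λ ∈ {1…d} such that {a_κ, a_λ} is an orthonormal basis of ℂ². -/

import Mathlib

open scoped ComplexInnerProductSpace

/-- The tensor product of two vectors, realized concretely on `EuclideanSpace`:
`(a ⊗ b) (i, j) = a i * b j`. -/
noncomputable def eprod {ι γ : Type*} (a : EuclideanSpace ℂ ι) (b : EuclideanSpace ℂ γ) :
    EuclideanSpace ℂ (ι × γ) :=
  WithLp.toLp 2 (fun p => a p.1 * b p.2)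

lemma inner_eprod {ι γ : Type*} [Fintype ι] [Fintype γ]
    (a a' : EuclideanSpace ℂ ι) (b b' : EuclideanSpace ℂ γ) :
    ⟪eprod a b, eprod a' b'⟫ = ⟪a, a'⟫ * ⟪b, b'⟫ := by
  simp only [eprod, PiLp.inner_apply, RCLike.inner_apply, map_mul]
  rw [Fintype.sum_prod_type, Finset.sum_mul_sum]
  apply Finset.sum_congr rfl
  intro i _
  apply Finset.sum_congr rfl
  intro j _
  ring

/-- For an orthonormal product basis `{aᵢ ⊗ bᵢ : i = 1…d}` of `ℂ² ⊗ ℂ^{d₂}`, `d = 2d₂`,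
and every index `κ`, there is an index `λ` such that `{a_κ, a_λ}` is an orthonormal basis
of `ℂ²`. -/
theorem qubit_factor_contains_orthonormal_basis {d₂ : ℕ} (hd₂ : 0 < d₂)
    (a : Fin (2 * d₂) → EuclideanSpace ℂ (Fin 2))
    (b : Fin (2 * d₂) → EuclideanSpace ℂ (Fin d₂))
    (ha : ∀ i, ‖a i‖ = 1) (hb : ∀ i, ‖b i‖ = 1)
    (hB : Orthonormal ℂ (fun i => eprod (a i) (b i))) :
    ∀ κ, ∃ l, Orthonormal ℂ ![a κ, a l] ∧
      Submodule.span ℂ {a κ, a l} = ⊤ := by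
  intro κ
  -- the vector orthogonal to a κ in ℂ²
  set c : EuclideanSpace ℂ (Fin 2) :=
    WithLp.toLp 2 (fun i : Fin 2 => if i = 0 then -(starRingEnd ℂ) (a κ 1) else (starRingEnd ℂ) (a κ 0)) with hc_def
  have hinner_a : ∀ x : EuclideanSpace ℂ (Fin 2), ∀ y : EuclideanSpace ℂ (Fin 2),
      ⟪x, y⟫ = (starRingEnd ℂ) (x 0) * y 0 + (starRingEnd ℂ) (x 1) * y 1 := by
    intro x y
    simp [PiLp.inner_apply, RCLike.inner_apply, Fin.sum_univ_two]
    ring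
  have hcκ : ⟪a κ, c⟫ = 0 := by
    rw [hinner_a]
    simp [hc_def]
    ring
  have hcc : ⟪c, c⟫ = 1 := by
    have h1 := inner_self_eq_norm_sq_to_K (𝕜 := ℂ) (a κ)
    rw [hinner_a, ha κ] at h1
    norm_num at h1
    rw [hinner_a]
    simp only [hc_def, if_pos rfl, if_neg (show (1 : Fin 2) ≠ 0 by decide), ↓reduceIte,
      map_neg, Complex.conj_conj, neg_mul, neg_neg]
    linear_combination h1
  -- the test vector
  set v : EuclideanSpace ℂ (Fin 2 × Fin d₂) := eprod c (b κ) with hv_def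
  have hbκ : ⟪b κ, b κ⟫ = 1 := by
    rw [inner_self_eq_norm_sq_to_K, hb κ]; norm_num
  have hvv : ⟪v, v⟫ = 1 := by rw [hv_def, inner_eprod, hcc, hbκ, one_mul]
  -- the product family spans everything
  haveI : Nonempty (Fin (2 * d₂)) := ⟨κ⟩
  have hspan : Submodule.span ℂ (Set.range fun i => eprod (a i) (b i)) = ⊤ := by
    apply LinearIndependent.span_eq_top_of_card_eq_finrank hB.linearIndependent
    simp [finrank_euclideanSpace]
  have hex : ∃ i, ⟪eprod (a i) (b i), v⟫ ≠ 0 := by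
    by_contra h
    push_neg at h
    have hle : Submodule.span ℂ (Set.range fun i => eprod (a i) (b i)) ≤ (ℂ ∙ v)ᗮ := by
      rw [Submodule.span_le]
      rintro _ ⟨i, rfl⟩
      rw [SetLike.mem_coe, Submodule.mem_orthogonal_singleton_iff_inner_right,
        ← inner_conj_symm]
      rw [h i, map_zero]
    rw [hspan, top_le_iff] at hle
    have : v ∈ (ℂ ∙ v)ᗮ := by rw [hle]; trivial
    rw [Submodule.mem_orthogonal_singleton_iff_inner_right] at this
    rw [this] at hvv
    exact zero_ne_one hvv
  obtain ⟨l, hl⟩ := hex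
  rw [hv_def, inner_eprod] at hl
  have hal_b : ⟪a l, c⟫ ≠ 0 := fun h => hl (by rw [h, zero_mul])
  have hbl : ⟪b l, b κ⟫ ≠ 0 := fun h => hl (by rw [h, mul_zero])
  have hlκ : l ≠ κ := by
    rintro rfl
    exact hal_b hcκ
  have horth : ⟪a l, a κ⟫ = 0 := by
    have := hB.2 hlκ
    simp only [inner_eprod] at this
    rcases mul_eq_zero.mp this with h | h
    · exact h
    · exact absurd h hbl
  have horth' : ⟪a κ, a l⟫ = 0 := by rw [← inner_conj_symm, horth, map_zero]
  have haa : ∀ i, ⟪a i, a i⟫ = (1 : ℂ) := by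
    intro i; rw [inner_self_eq_norm_sq_to_K, ha i]; norm_num
  refine ⟨l, ?_, ?_⟩
  · rw [orthonormal_iff_ite]
    intro i j
    fin_cases i <;> fin_cases j <;>
      simp [haa, horth, horth', ha]
  · have hon : Orthonormal ℂ ![a κ, a l] := by
      rw [orthonormal_iff_ite]
      intro i j
      fin_cases i <;> fin_cases j <;> simp [haa, horth, horth', ha]
    have := hon.linearIndependent.span_eq_top_of_card_eq_finrank
      (by simp [finrank_euclideanSpace])
    rw [← this]
    congr 1
    simp [Matrix.range_cons, Matrix.range_cons_empty]
    exact Set.pair_comm _ _
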